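/- Let d₁, d₂ ≥ 1. For every f ∈ L^∞(ℝ^{d₁+d₂}) there exist a countable 1/2-sparse family S of dyadic rectangles and a constant C depending only on d₁ and d₂ such that M_{D×D} f(x) ≤ C · P^{1/2}_{D×D}(M_S f)(x) for all x ∈ ℝ^{d₁+d₂}, where M_{D×D} f(x) := sup { |⟨f⟩_{Q₁×Q₂}| : Q₁×Q₂ a dyadic rectangle containing x } is the strong maximal function, M_S f := sup_{R∈S} |⟨f⟩_R| 1_R, and P^{1/2}_{D×D}(g)(x) := sup { P_R^{1/2}(g) : R a dyadic rectangle containing x }. -/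

import Mathlib

open MeasureTheory
open scoped ENNReal

/-- The dyadic cube in `ℝ^d` with scale `2^{-k}` and corner `2^{-k} n`. -/
def dyadicCube (d : ℕ) (k : ℤ) (n : Fin d → ℤ) : Set (Fin d → ℝ) :=
  {x | ∀ i, (n i : ℝ) * (2 : ℝ) ^ (-k) ≤ x i ∧ x i < ((n i : ℝ) + 1) * (2 : ℝ) ^ (-k)}

/-- A dyadic rectangle in `ℝ^{d₁} × ℝ^{d₂}` is a product of two dyadic cubes. -/
def IsDyadicRect (d₁ d₂ : ℕ) (R : Set ((Fin d₁ → ℝ) × (Fin d₂ → ℝ))) : Prop :=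
  ∃ (k₁ : ℤ) (n₁ : Fin d₁ → ℤ) (k₂ : ℤ) (n₂ : Fin d₂ → ℤ),
    R = (dyadicCube d₁ k₁ n₁) ×ˢ (dyadicCube d₂ k₂ n₂)

/-- The average `⟨f⟩_R = |R|⁻¹ ∫_R f`. -/
noncomputable def rectAvg {d₁ d₂ : ℕ} (R : Set ((Fin d₁ → ℝ) × (Fin d₂ → ℝ)))
    (f : (Fin d₁ → ℝ) × (Fin d₂ → ℝ) → ℝ) : ℝ :=
  (volume R).toReal⁻¹ * ∫ y in R, f y

/-- The percentile of `g` over `R` at ratio `r`. -/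
noncomputable def rectPerc {d₁ d₂ : ℕ} (R : Set ((Fin d₁ → ℝ) × (Fin d₂ → ℝ))) (r : ℝ)
    (g : (Fin d₁ → ℝ) × (Fin d₂ → ℝ) → ℝ) : ℝ :=
  sInf {l : ℝ | volume {x ∈ R | g x > l} ≤ ENNReal.ofReal r * volume R}

/-- The biparametric (strong) dyadic maximal function. -/
noncomputable def strongMax (d₁ d₂ : ℕ) (f : (Fin d₁ → ℝ) × (Fin d₂ → ℝ) → ℝ)
    (x : (Fin d₁ → ℝ) × (Fin d₂ → ℝ)) : ℝ :=
  sSup {t : ℝ | ∃ R, IsDyadicRect d₁ d₂ R ∧ x ∈ R ∧ t = |rectAvg R f|}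

/-- The biparametric percentile maximal function at ratio `1/2`. -/
noncomputable def strongPercMax (d₁ d₂ : ℕ) (g : (Fin d₁ → ℝ) × (Fin d₂ → ℝ) → ℝ)
    (x : (Fin d₁ → ℝ) × (Fin d₂ → ℝ)) : ℝ :=
  sSup {t : ℝ | ∃ R, IsDyadicRect d₁ d₂ R ∧ x ∈ R ∧ t = rectPerc R (1 / 2) g}

namespace Stmt7

abbrev Pt (d₁ d₂ : ℕ) := (Fin d₁ → ℝ) × (Fin d₂ → ℝ)
abbrev Param (d₁ d₂ : ℕ) := (ℤ × (Fin d₁ → ℤ)) × (ℤ × (Fin d₂ → ℤ))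

def rect {d₁ d₂ : ℕ} (p : Param d₁ d₂) : Set (Pt d₁ d₂) :=
  (dyadicCube d₁ p.1.1 p.1.2) ×ˢ (dyadicCube d₂ p.2.1 p.2.2)

lemma isDyadicRect_rect {d₁ d₂ : ℕ} (p : Param d₁ d₂) : IsDyadicRect d₁ d₂ (rect p) :=
  ⟨p.1.1, p.1.2, p.2.1, p.2.2, rfl⟩

lemma cube_eq_pi (d : ℕ) (k : ℤ) (n : Fin d → ℤ) :
    dyadicCube d k n = Set.pi Set.univ
      (fun i => Set.Ico ((n i : ℝ) * (2:ℝ)^(-k)) (((n i : ℝ)+1) * (2:ℝ)^(-k))) := by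
  ext x; simp [dyadicCube, Set.mem_pi, Set.mem_Ico]

lemma measurable_cube (d : ℕ) (k : ℤ) (n : Fin d → ℤ) : MeasurableSet (dyadicCube d k n) := by
  rw [cube_eq_pi]; exact MeasurableSet.univ_pi fun i => measurableSet_Ico

lemma volume_cube (d : ℕ) (k : ℤ) (n : Fin d → ℤ) :
    volume (dyadicCube d k n) = (ENNReal.ofReal ((2:ℝ)^(-k)))^d := by
  rw [cube_eq_pi, volume_pi_pi]
  have h : ∀ i : Fin d,
      volume (Set.Ico ((n i : ℝ) * (2:ℝ)^(-k)) (((n i : ℝ)+1) * (2:ℝ)^(-k)))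
        = ENNReal.ofReal ((2:ℝ)^(-k)) := by
    intro i; rw [Real.volume_Ico]; congr 1; ring
  rw [Finset.prod_congr rfl (fun i _ => h i), Finset.prod_const, Finset.card_univ,
    Fintype.card_fin]

lemma measurable_rect {d₁ d₂ : ℕ} (p : Param d₁ d₂) : MeasurableSet (rect p) :=
  (measurable_cube _ _ _).prod (measurable_cube _ _ _)

lemma volume_rect_pos {d₁ d₂ : ℕ} (p : Param d₁ d₂) : 0 < volume (rect p) := by
  rw [rect, Measure.volume_eq_prod, Measure.prod_prod, volume_cube, volume_cube]
  have h1 : ∀ (k : ℤ), (0:ENNReal) < ENNReal.ofReal ((2:ℝ)^(-k)) := by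
    intro k; rw [ENNReal.ofReal_pos]; positivity
  exact ENNReal.mul_pos (pow_ne_zero _ (h1 _).ne') (pow_ne_zero _ (h1 _).ne')

lemma volume_rect_lt_top {d₁ d₂ : ℕ} (p : Param d₁ d₂) : volume (rect p) < ⊤ := by
  rw [rect, Measure.volume_eq_prod, Measure.prod_prod, volume_cube, volume_cube]
  exact ENNReal.mul_lt_top (ENNReal.pow_lt_top ENNReal.ofReal_lt_top)
    (ENNReal.pow_lt_top ENNReal.ofReal_lt_top)


variable {d₁ d₂ : ℕ}

noncomputable def avR (f : Pt d₁ d₂ → ℝ) (p : Param d₁ d₂) : ℝ := |rectAvg (rect p) f|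

lemma avR_nonneg (f : Pt d₁ d₂ → ℝ) (p : Param d₁ d₂) : 0 ≤ avR f p := abs_nonneg _

lemma rectAvg_abs_le {f : Pt d₁ d₂ → ℝ} {M : ℝ} (hfM : ∀ x, |f x| ≤ M)
    (p : Param d₁ d₂) : |rectAvg (rect p) f| ≤ M := by
  have hv : 0 < (volume (rect p)).toReal :=
    ENNReal.toReal_pos (volume_rect_pos p).ne' (volume_rect_lt_top p).ne
  haveI : IsFiniteMeasure (volume.restrict (rect p)) :=
    ⟨by rw [Measure.restrict_apply_univ]; exact volume_rect_lt_top p⟩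
  have hI : ‖∫ y in rect p, f y‖ ≤ M * ((volume.restrict (rect p)) Set.univ).toReal :=
    norm_integral_le_of_norm_le_const (Filter.Eventually.of_forall fun x => by
      simpa [Real.norm_eq_abs] using hfM x)
  rw [Measure.restrict_apply_univ] at hI
  rw [rectAvg, abs_mul, abs_inv, abs_of_nonneg ENNReal.toReal_nonneg]
  calc (volume (rect p)).toReal⁻¹ * |∫ y in rect p, f y|
      ≤ (volume (rect p)).toReal⁻¹ * (M * (volume (rect p)).toReal) := by
        apply mul_le_mul_of_nonneg_left _ (by positivity)
        simpa [Real.norm_eq_abs] using hI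
    _ = M := by field_simp
  
lemma avR_le {f : Pt d₁ d₂ → ℝ} {M : ℝ} (hfM : ∀ x, |f x| ≤ M) (p : Param d₁ d₂) :
    avR f p ≤ M := rectAvg_abs_le hfM p

lemma exists_lvl (f : Pt d₁ d₂ → ℝ) (M : ℝ) {p : Param d₁ d₂} (h : 0 < avR f p) :
    ∃ m : ℕ, M / 2^(m+1) < avR f p := by
  obtain ⟨m, hm⟩ := exists_nat_gt (M / avR f p)
  refine ⟨m, ?_⟩
  rw [div_lt_iff₀ (by positivity)]
  have h2 : (m : ℝ) ≤ 2^(m+1) := by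
    calc (m:ℝ) ≤ 2^m := by exact_mod_cast (Nat.lt_two_pow_self (n := m)).le
    _ ≤ 2^(m+1) := by apply pow_le_pow_right₀ <;> norm_num
  have h1 : M < (m:ℝ) * avR f p := by
    have := (div_lt_iff₀ h).1 hm; linarith
  nlinarith [h.le]

noncomputable def lvl (f : Pt d₁ d₂ → ℝ) (M : ℝ) (p : Param d₁ d₂) : ℕ :=
  if h : 0 < avR f p then Nat.find (exists_lvl f M h) else 0

lemma lvl_spec {f : Pt d₁ d₂ → ℝ} (M : ℝ) {p : Param d₁ d₂} (h : 0 < avR f p) :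
    M / 2^(lvl f M p + 1) < avR f p := by
  rw [lvl, dif_pos h]; exact Nat.find_spec (exists_lvl f M h)

lemma avR_le_lvl {f : Pt d₁ d₂ → ℝ} {M : ℝ} (hfM : ∀ x, |f x| ≤ M)
    {p : Param d₁ d₂} (h : 0 < avR f p) : avR f p ≤ M / 2^(lvl f M p) := by
  rw [lvl, dif_pos h]
  rcases Nat.eq_zero_or_pos (Nat.find (exists_lvl f M h)) with h0 | h0
  · rw [h0]; simpa using avR_le hfM p
  · obtain ⟨m, hm⟩ := Nat.exists_eq_succ_of_ne_zero h0.ne'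
    rw [hm]
    have := Nat.find_min (exists_lvl f M h) (m := m) (by omega)
    push_neg at this
    simpa using this



noncomputable def enc (d₁ d₂ : ℕ) : Param d₁ d₂ → ℕ :=
  (exists_injective_nat (Param d₁ d₂)).choose

lemma enc_inj (d₁ d₂ : ℕ) : Function.Injective (enc d₁ d₂) :=
  (exists_injective_nat (Param d₁ d₂)).choose_spec

noncomputable def pkey (f : Pt d₁ d₂ → ℝ) (M : ℝ) (p : Param d₁ d₂) : ℕ × ℕ :=
  (lvl f M p, enc d₁ d₂ p)

def rel (f : Pt d₁ d₂ → ℝ) (M : ℝ) (q p : Param d₁ d₂) : Prop :=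
  Prod.Lex (· < ·) (· < ·) (pkey f M q) (pkey f M p)

lemma rel_wf (f : Pt d₁ d₂ → ℝ) (M : ℝ) : WellFounded (rel f M) :=
  InvImage.wf (pkey f M) (WellFounded.prod_lex wellFounded_lt wellFounded_lt)

lemma rel_total (f : Pt d₁ d₂ → ℝ) (M : ℝ) {q p : Param d₁ d₂} (h : q ≠ p) :
    rel f M q p ∨ rel f M p q := by
  have hk : pkey f M q ≠ pkey f M p := by
    intro he
    exact h (enc_inj d₁ d₂ (congrArg Prod.snd he))
  rcases Nat.lt_trichotomy (lvl f M q) (lvl f M p) with h1 | h1 | h1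
  · exact Or.inl (Prod.Lex.left _ _ h1)
  · rcases Nat.lt_trichotomy (enc d₁ d₂ q) (enc d₁ d₂ p) with h2 | h2 | h2
    · left
      have : pkey f M q = (lvl f M p, enc d₁ d₂ q) := by rw [pkey, h1]
      rw [rel, this, pkey]
      exact Prod.Lex.right _ h2
    · exact absurd (Prod.ext h1 h2) hk
    · right
      have : pkey f M p = (lvl f M q, enc d₁ d₂ p) := by rw [pkey, h1]
      rw [rel, this, pkey]
      exact Prod.Lex.right _ h2
  · exact Or.inr (Prod.Lex.left _ _ h1)

lemma rel_lvl_le {f : Pt d₁ d₂ → ℝ} {M : ℝ} {q p : Param d₁ d₂} (h : rel f M q p) :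
    lvl f M q ≤ lvl f M p := by
  rw [rel, Prod.lex_iff] at h
  rcases h with h | h
  · exact h.le
  · exact le_of_eq h.1

noncomputable def Sel (f : Pt d₁ d₂ → ℝ) (M : ℝ) : Param d₁ d₂ → Prop :=
  (rel_wf f M).fix (fun p ih => 0 < avR f p ∧
    2 * volume (rect p ∩ ⋃ q, ⋃ (h : rel f M q p), ⋃ (_ : ih q h), rect q)
      ≤ volume (rect p))

def prevU (f : Pt d₁ d₂ → ℝ) (M : ℝ) (p : Param d₁ d₂) : Set (Pt d₁ d₂) :=
  ⋃ q, ⋃ (_ : rel f M q p), ⋃ (_ : Sel f M q), rect q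

lemma Sel_iff (f : Pt d₁ d₂ → ℝ) (M : ℝ) (p : Param d₁ d₂) :
    Sel f M p ↔ (0 < avR f p ∧
      2 * volume (rect p ∩ prevU f M p) ≤ volume (rect p)) := by
  rw [Sel, WellFounded.fix_eq]
  exact Iff.rfl



lemma measurable_prevU (f : Pt d₁ d₂ → ℝ) (M : ℝ) (p : Param d₁ d₂) :
    MeasurableSet (prevU f M p) := by
  refine MeasurableSet.iUnion fun q => MeasurableSet.iUnion fun _ =>
    MeasurableSet.iUnion fun _ => measurable_rect q

lemma subset_prevU {f : Pt d₁ d₂ → ℝ} {M : ℝ} {q p : Param d₁ d₂}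
    (hrel : rel f M q p) (hsel : Sel f M q) : rect q ⊆ prevU f M p := by
  intro x hx
  exact Set.mem_iUnion.2 ⟨q, Set.mem_iUnion.2 ⟨hrel, Set.mem_iUnion.2 ⟨hsel, hx⟩⟩⟩

def selS (f : Pt d₁ d₂ → ℝ) (M : ℝ) : Set (Set (Pt d₁ d₂)) :=
  rect '' {p : Param d₁ d₂ | Sel f M p}

lemma selS_countable (f : Pt d₁ d₂ → ℝ) (M : ℝ) : (selS f M).Countable :=
  (Set.to_countable _).image _

lemma selS_rects (f : Pt d₁ d₂ → ℝ) (M : ℝ) :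
    ∀ R ∈ selS f M, IsDyadicRect d₁ d₂ R := by
  rintro R ⟨p, _, rfl⟩; exact isDyadicRect_rect p

noncomputable def G (f : Pt d₁ d₂ → ℝ) (M : ℝ) : Pt d₁ d₂ → ℝ :=
  fun y => ⨆ R ∈ selS f M, Set.indicator R (fun _ => |rectAvg R f|) y

lemma inner_nonneg (f : Pt d₁ d₂ → ℝ) (M : ℝ) (R : Set (Pt d₁ d₂)) (y : Pt d₁ d₂) :
    0 ≤ ⨆ _ : R ∈ selS f M, Set.indicator R (fun _ => |rectAvg R f|) y := by
  by_cases h : R ∈ selS f M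
  · haveI : Nonempty (R ∈ selS f M) := ⟨h⟩
    rw [ciSup_const]
    exact Set.indicator_nonneg (fun _ _ => abs_nonneg _) y
  · haveI : IsEmpty (R ∈ selS f M) := ⟨h⟩
    rw [Real.iSup_of_isEmpty]

lemma inner_le {f : Pt d₁ d₂ → ℝ} {M : ℝ} (hfM : ∀ x, |f x| ≤ M)
    (R : Set (Pt d₁ d₂)) (y : Pt d₁ d₂) :
    (⨆ _ : R ∈ selS f M, Set.indicator R (fun _ => |rectAvg R f|) y) ≤ max M 0 := by
  by_cases h : R ∈ selS f M
  · haveI : Nonempty (R ∈ selS f M) := ⟨h⟩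
    rw [ciSup_const]
    obtain ⟨p, _, rfl⟩ := h
    classical
    rw [Set.indicator_apply]
    split_ifs
    · exact le_max_of_le_left (rectAvg_abs_le hfM p)
    · exact le_max_right _ _
  · haveI : IsEmpty (R ∈ selS f M) := ⟨h⟩
    rw [Real.iSup_of_isEmpty]
    exact le_max_right _ _

lemma G_nonneg (f : Pt d₁ d₂ → ℝ) (M : ℝ) (y : Pt d₁ d₂) : 0 ≤ G f M y :=
  Real.iSup_nonneg fun R => inner_nonneg f M R y

lemma G_le {f : Pt d₁ d₂ → ℝ} {M : ℝ} (hfM : ∀ x, |f x| ≤ M) (y : Pt d₁ d₂) :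
    G f M y ≤ max M 0 :=
  Real.iSup_le (fun R => inner_le hfM R y) (le_max_right _ _)

lemma G_ge {f : Pt d₁ d₂ → ℝ} {M : ℝ} (hfM : ∀ x, |f x| ≤ M)
    {p : Param d₁ d₂} (hp : Sel f M p) {y : Pt d₁ d₂} (hy : y ∈ rect p) :
    avR f p ≤ G f M y := by
  have hb : BddAbove (Set.range fun R : Set (Pt d₁ d₂) =>
      ⨆ _ : R ∈ selS f M, Set.indicator R (fun _ => |rectAvg R f|) y) := by
    refine ⟨max M 0, ?_⟩
    rintro _ ⟨R, rfl⟩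
    exact inner_le hfM R y
  have hmem : rect p ∈ selS f M := ⟨p, hp, rfl⟩
  haveI : Nonempty (rect p ∈ selS f M) := ⟨hmem⟩
  calc avR f p = Set.indicator (rect p) (fun _ => |rectAvg (rect p) f|) y := by
        rw [Set.indicator_of_mem hy]; rfl
    _ = ⨆ _ : rect p ∈ selS f M, Set.indicator (rect p) (fun _ => |rectAvg (rect p) f|) y :=
        ciSup_const.symm
    _ ≤ G f M y := le_ciSup hb (rect p)



lemma ofReal_half_mul (v : ℝ≥0∞) : ENNReal.ofReal (1/2) * v = v / 2 := by
  rw [ENNReal.ofReal_div_of_pos (by norm_num), ENNReal.div_eq_inv_mul, ENNReal.div_eq_inv_mul]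
  norm_num

lemma half_lt_self_rect {d₁ d₂ : ℕ} (p : Param d₁ d₂) :
    ENNReal.ofReal (1/2) * volume (rect p) < volume (rect p) := by
  rw [ofReal_half_mul]
  exact ENNReal.half_lt_self (volume_rect_pos p).ne' (volume_rect_lt_top p).ne

lemma maxM_mem_PSet {f : Pt d₁ d₂ → ℝ} {M : ℝ} (hfM : ∀ x, |f x| ≤ M)
    (R : Set (Pt d₁ d₂)) :
    max M 0 ∈ {l : ℝ | volume {x ∈ R | G f M x > l} ≤ ENNReal.ofReal (1/2) * volume R} := by
  have : {x ∈ R | G f M x > max M 0} = (∅ : Set (Pt d₁ d₂)) := by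
    ext x
    simp only [Set.mem_setOf_eq, Set.mem_empty_iff_false, iff_false, not_and, not_lt]
    exact fun _ => G_le hfM x
  rw [Set.mem_setOf_eq, this]
  simp

lemma PSet_lb (f : Pt d₁ d₂ → ℝ) (M : ℝ) (p : Param d₁ d₂) :
    ∀ l ∈ {l : ℝ | volume {x ∈ rect p | G f M x > l}
      ≤ ENNReal.ofReal (1/2) * volume (rect p)}, 0 ≤ l := by
  intro l hl
  by_contra hneg
  push_neg at hneg
  have heq : {x ∈ rect p | G f M x > l} = rect p := by
    ext x
    simp only [Set.mem_setOf_eq, and_iff_left_iff_imp]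
    exact fun _ => lt_of_lt_of_le hneg (G_nonneg f M x)
  rw [Set.mem_setOf_eq, heq] at hl
  exact absurd hl (not_le.2 (half_lt_self_rect p))

lemma rectPerc_eq (f : Pt d₁ d₂ → ℝ) (M : ℝ) (R : Set (Pt d₁ d₂)) :
    rectPerc R (1/2) (G f M)
      = sInf {l : ℝ | volume {x ∈ R | G f M x > l} ≤ ENNReal.ofReal (1/2) * volume R} := rfl

lemma rectPerc_nonneg {f : Pt d₁ d₂ → ℝ} {M : ℝ} (hfM : ∀ x, |f x| ≤ M) (p : Param d₁ d₂) :
    0 ≤ rectPerc (rect p) (1/2) (G f M) := by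
  rw [rectPerc_eq]
  exact le_csInf ⟨max M 0, maxM_mem_PSet hfM (rect p)⟩ (PSet_lb f M p)

lemma rectPerc_le_max {f : Pt d₁ d₂ → ℝ} {M : ℝ} (hfM : ∀ x, |f x| ≤ M) (p : Param d₁ d₂) :
    rectPerc (rect p) (1/2) (G f M) ≤ max M 0 := by
  rw [rectPerc_eq]
  exact csInf_le ⟨0, PSet_lb f M p⟩ (maxM_mem_PSet hfM (rect p))

lemma perc_ge {f : Pt d₁ d₂ → ℝ} {M : ℝ} (hfM : ∀ x, |f x| ≤ M) (hM1 : 1 ≤ M)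
    {p : Param d₁ d₂} (h : 0 < avR f p) :
    M / 2^(lvl f M p + 1) ≤ rectPerc (rect p) (1/2) (G f M) := by
  rw [rectPerc_eq]
  refine le_csInf ⟨max M 0, maxM_mem_PSet hfM (rect p)⟩ ?_
  intro l hl
  by_contra hlt
  push_neg at hlt
  rw [Set.mem_setOf_eq] at hl
  have key : ENNReal.ofReal (1/2) * volume (rect p) < volume {x ∈ rect p | G f M x > l} := by
    by_cases hsel : Sel f M p
    · have heq : {x ∈ rect p | G f M x > l} = rect p := by
        ext x
        simp only [Set.mem_setOf_eq, and_iff_left_iff_imp]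
        intro hx
        have h1 : avR f p ≤ G f M x := G_ge hfM hsel hx
        have h2 : M / 2^(lvl f M p + 1) < avR f p := lvl_spec M h
        linarith
      rw [heq]
      exact half_lt_self_rect p
    · rw [Sel_iff] at hsel
      push_neg at hsel
      have h2 := hsel h
      have hsub : rect p ∩ prevU f M p ⊆ {x ∈ rect p | G f M x > l} := by
        rintro x ⟨hx1, hx2⟩
        refine ⟨hx1, ?_⟩
        rw [prevU] at hx2
        obtain ⟨q, hq⟩ := Set.mem_iUnion.1 hx2
        obtain ⟨hrel, hq⟩ := Set.mem_iUnion.1 hq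
        obtain ⟨hselq, hxq⟩ := Set.mem_iUnion.1 hq
        have haq : 0 < avR f q := ((Sel_iff f M q).1 hselq).1
        have h3 : M / 2^(lvl f M q + 1) < avR f q := lvl_spec M haq
        have h4 : avR f q ≤ G f M x := G_ge hfM hselq hxq
        have h5 : M / 2^(lvl f M p + 1) ≤ M / 2^(lvl f M q + 1) := by
          apply div_le_div_of_nonneg_left (by linarith) (by positivity)
          have := rel_lvl_le hrel
          have : (2:ℝ)^(lvl f M q + 1) ≤ 2^(lvl f M p + 1) := by
            apply pow_le_pow_right₀ (by norm_num); omega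
          linarith
        linarith
      calc ENNReal.ofReal (1/2) * volume (rect p) < volume (rect p ∩ prevU f M p) := by
            rw [ofReal_half_mul]
            rw [ENNReal.div_lt_iff (Or.inl two_ne_zero) (Or.inl ENNReal.ofNat_ne_top)]
            rw [mul_comm]
            exact h2
        _ ≤ volume {x ∈ rect p | G f M x > l} := measure_mono hsub
  exact absurd hl (not_le.2 key)



noncomputable def EselF (f : Pt d₁ d₂ → ℝ) (M : ℝ) (R : Set (Pt d₁ d₂)) : Set (Pt d₁ d₂) :=
  ⋃ p, ⋃ (_ : Sel f M p ∧ rect p = R), (rect p \ prevU f M p)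

lemma EselF_measurable (f : Pt d₁ d₂ → ℝ) (M : ℝ) (R : Set (Pt d₁ d₂)) :
    MeasurableSet (EselF f M R) :=
  MeasurableSet.iUnion fun p => MeasurableSet.iUnion fun _ =>
    (measurable_rect p).diff (measurable_prevU f M p)

lemma EselF_subset (f : Pt d₁ d₂ → ℝ) (M : ℝ) (R : Set (Pt d₁ d₂)) :
    EselF f M R ⊆ R := by
  intro x hx
  obtain ⟨p, hp⟩ := Set.mem_iUnion.1 hx
  obtain ⟨⟨_, rfl⟩, hx2⟩ := Set.mem_iUnion.1 hp
  exact hx2.1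

lemma EselF_vol {f : Pt d₁ d₂ → ℝ} {M : ℝ} {p : Param d₁ d₂} (hsel : Sel f M p) :
    volume (rect p) ≤ 2 * volume (EselF f M (rect p)) := by
  have hA : 2 * volume (rect p ∩ prevU f M p) ≤ volume (rect p) :=
    ((Sel_iff f M p).1 hsel).2
  have hs : volume (rect p ∩ prevU f M p) + volume (rect p \ prevU f M p)
      = volume (rect p) := measure_inter_add_diff _ (measurable_prevU f M p)
  have hB : volume (rect p) ≤ 2 * volume (rect p \ prevU f M p) := by
    have h2 : volume (rect p) + volume (rect p)
        ≤ volume (rect p) + 2 * volume (rect p \ prevU f M p) := by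
      calc volume (rect p) + volume (rect p)
          = 2 * volume (rect p ∩ prevU f M p) + 2 * volume (rect p \ prevU f M p) := by
            rw [← mul_add, hs, two_mul]
        _ ≤ volume (rect p) + 2 * volume (rect p \ prevU f M p) := by
            exact add_le_add hA le_rfl
    exact (ENNReal.add_le_add_iff_left (volume_rect_lt_top p).ne).1 h2
  refine hB.trans (mul_le_mul_right (measure_mono ?_) 2)
  intro x hx
  exact Set.mem_iUnion.2 ⟨p, Set.mem_iUnion.2 ⟨⟨hsel, rfl⟩, hx⟩⟩

lemma EselF_disjoint (f : Pt d₁ d₂ → ℝ) (M : ℝ) :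
    (selS f M).PairwiseDisjoint (EselF f M) := by
  rintro R₁ hR₁ R₂ hR₂ hne
  rw [Function.onFun, Set.disjoint_left]
  intro x hx1 hx2
  obtain ⟨p, hp⟩ := Set.mem_iUnion.1 hx1
  obtain ⟨⟨hselp, hrp⟩, hxp⟩ := Set.mem_iUnion.1 hp
  obtain ⟨q, hq⟩ := Set.mem_iUnion.1 hx2
  obtain ⟨⟨hselq, hrq⟩, hxq⟩ := Set.mem_iUnion.1 hq
  have hpq : p ≠ q := by
    intro he
    exact hne (by rw [← hrp, ← hrq, he])
  rcases rel_total f M hpq with hr | hr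
  · exact hxq.2 (subset_prevU hr hselp hxp.1)
  · exact hxp.2 (subset_prevU hr hselq hxq.1)

end Stmt7

theorem stmt7 (d₁ d₂ : ℕ) (hd₁ : 0 < d₁) (hd₂ : 0 < d₂) :
    ∃ C : ℝ, 0 < C ∧
      ∀ f : (Fin d₁ → ℝ) × (Fin d₂ → ℝ) → ℝ, Measurable f → (∃ M : ℝ, ∀ x, |f x| ≤ M) →
        ∃ S : Set (Set ((Fin d₁ → ℝ) × (Fin d₂ → ℝ))),
          S.Countable ∧ (∀ R ∈ S, IsDyadicRect d₁ d₂ R) ∧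
          -- S is 1/2-sparse
          (∃ Esel : Set ((Fin d₁ → ℝ) × (Fin d₂ → ℝ)) → Set ((Fin d₁ → ℝ) × (Fin d₂ → ℝ)),
            (∀ R ∈ S, MeasurableSet (Esel R) ∧ Esel R ⊆ R ∧ volume R ≤ 2 * volume (Esel R)) ∧
            S.PairwiseDisjoint Esel) ∧
          ∀ x, strongMax d₁ d₂ f x ≤
            C * strongPercMax d₁ d₂
              (fun y => ⨆ R ∈ S, Set.indicator R (fun _ => |rectAvg R f|) y) x := by
  classical
  refine ⟨2, by norm_num, ?_⟩
  intro f hmeas hMex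
  obtain ⟨M₀, hM₀⟩ := hMex
  set M : ℝ := max M₀ 1 with hMdef
  have hM1 : (1:ℝ) ≤ M := le_max_right _ _
  have hfM : ∀ x, |f x| ≤ M := fun x => (hM₀ x).trans (le_max_left _ _)
  refine ⟨Stmt7.selS f M, Stmt7.selS_countable f M, Stmt7.selS_rects f M,
    ⟨Stmt7.EselF f M, ?_, Stmt7.EselF_disjoint f M⟩, ?_⟩
  · rintro R ⟨p, hsel, rfl⟩
    exact ⟨Stmt7.EselF_measurable f M _, Stmt7.EselF_subset f M _, Stmt7.EselF_vol hsel⟩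
  · intro x
    show strongMax d₁ d₂ f x ≤ 2 * strongPercMax d₁ d₂ (Stmt7.G f M) x
    have hPnn : 0 ≤ strongPercMax d₁ d₂ (Stmt7.G f M) x := by
      apply Real.sSup_nonneg
      rintro t ⟨R, ⟨k1, n1, k2, n2, rfl⟩, hx, rfl⟩
      exact Stmt7.rectPerc_nonneg hfM ((k1, n1), (k2, n2))
    have hbdd : BddAbove {t : ℝ | ∃ R, IsDyadicRect d₁ d₂ R ∧ x ∈ R ∧
        t = rectPerc R (1 / 2) (Stmt7.G f M)} := by
      refine ⟨max M 0, ?_⟩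
      rintro t ⟨R, ⟨k1, n1, k2, n2, rfl⟩, hx, rfl⟩
      exact Stmt7.rectPerc_le_max hfM ((k1, n1), (k2, n2))
    apply Real.sSup_le _ (by linarith)
    rintro t ⟨R, ⟨k1, n1, k2, n2, rfl⟩, hxR, rfl⟩
    set p : Stmt7.Param d₁ d₂ := ((k1, n1), (k2, n2)) with hp
    by_cases h : 0 < Stmt7.avR f p
    · have hle : rectPerc (Stmt7.rect p) (1/2) (Stmt7.G f M)
          ≤ strongPercMax d₁ d₂ (Stmt7.G f M) x := by
        apply le_csSup hbdd
        exact ⟨Stmt7.rect p, Stmt7.isDyadicRect_rect p, hxR, rfl⟩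
      have hpg := Stmt7.perc_ge hfM hM1 h
      have h2 : Stmt7.avR f p ≤ M / 2^(Stmt7.lvl f M p) := Stmt7.avR_le_lvl hfM h
      have h3 : M / 2^(Stmt7.lvl f M p) = 2 * (M / 2^(Stmt7.lvl f M p + 1)) := by
        rw [pow_succ]; ring
      calc |rectAvg (dyadicCube d₁ k1 n1 ×ˢ dyadicCube d₂ k2 n2) f|
          = Stmt7.avR f p := rfl
        _ ≤ 2 * (M / 2^(Stmt7.lvl f M p + 1)) := by rw [← h3]; exact h2
        _ ≤ 2 * rectPerc (Stmt7.rect p) (1/2) (Stmt7.G f M) := by linarith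
        _ ≤ 2 * strongPercMax d₁ d₂ (Stmt7.G f M) x := by linarith
    · push_neg at h
      have h0 : Stmt7.avR f p = 0 := le_antisymm h (Stmt7.avR_nonneg f p)
      calc |rectAvg (dyadicCube d₁ k1 n1 ×ˢ dyadicCube d₂ k2 n2) f|
          = Stmt7.avR f p := rfl
        _ = 0 := h0
        _ ≤ 2 * strongPercMax d₁ d₂ (Stmt7.G f M) x := by linarith
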